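/- For all t > 0, θ ∈ ℝ, and x ∈ ℝ², the kernel K_{t,θ}(x) := π ∫∫_{0<u<v<t} g_u(x) G_θ(v-u) du dv satisfies K_{t,θ}(x) = K_{1, θ + log t}(x/√t), where G_θ(w) = ∫₀^∞ e^{(θ-γ)s} s w^{s-1} / Γ(s+1) ds and g_u is the standard 2d heat kernel. -/

import Mathlib

open Real

noncomputable def heatKernel2d (u : ℝ) (z : EuclideanSpace ℝ (Fin 2)) : ℝ :=
  (1 / (2 * Real.pi * u)) * Real.exp (-‖z‖ ^ 2 / (2 * u))

noncomputable def Gtheta (θ : ℝ) (w : ℝ) : ℝ :=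
  ∫ s in Set.Ioi (0:ℝ),
    Real.exp ((θ - Real.eulerMascheroniConstant) * s) * s * w ^ (s - 1) / Real.Gamma (s + 1)

noncomputable def Kkernel (t θ : ℝ) (x : EuclideanSpace ℝ (Fin 2)) : ℝ :=
  Real.pi * ∫ v in (0:ℝ)..t, ∫ u in (0:ℝ)..v, heatKernel2d u x * Gtheta θ (v - u)

lemma heatKernel2d_zero (z : EuclideanSpace ℝ (Fin 2)) : heatKernel2d 0 z = 0 := by
  simp [heatKernel2d]

lemma Gtheta_zero (θ : ℝ) : Gtheta θ 0 = 0 := by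
  unfold Gtheta
  apply MeasureTheory.integral_eq_zero_of_ae
  have h : ∀ᵐ s : ℝ, s ≠ 1 := by
    rw [MeasureTheory.ae_iff]
    simp only [ne_eq, not_not]
    have : {s : ℝ | s = 1} = {1} := by ext s; simp
    rw [this]
    exact Real.volume_singleton
  filter_upwards [MeasureTheory.ae_restrict_of_ae h] with s hs
  rw [Real.zero_rpow (by intro h; apply hs; linarith : s - 1 ≠ 0)]
  simp

lemma heat_scale (t : ℝ) (ht : 0 < t) (u : ℝ) (hu : 0 < u)
    (x : EuclideanSpace ℝ (Fin 2)) :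
    heatKernel2d (t * u) x = t⁻¹ * heatKernel2d u ((Real.sqrt t)⁻¹ • x) := by
  have hs : (0:ℝ) < Real.sqrt t := Real.sqrt_pos.mpr ht
  have hn : ‖(Real.sqrt t)⁻¹ • x‖ ^ 2 = ‖x‖ ^ 2 / t := by
    rw [norm_smul, norm_inv, Real.norm_eq_abs, abs_of_pos hs, mul_pow, inv_pow,
      Real.sq_sqrt ht.le, div_eq_inv_mul]
  unfold heatKernel2d
  rw [hn]
  have harg : -(‖x‖ ^ 2 / t) / (2 * u) = -‖x‖ ^ 2 / (2 * (t * u)) := by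
    ring
  rw [harg]
  ring

lemma G_scale (t : ℝ) (ht : 0 < t) (θ w : ℝ) (hw : 0 < w) :
    Gtheta θ (t * w) = t⁻¹ * Gtheta (θ + Real.log t) w := by
  unfold Gtheta
  rw [← MeasureTheory.integral_const_mul]
  apply MeasureTheory.setIntegral_congr_fun measurableSet_Ioi
  intro s hs
  have h1 : (t * w) ^ (s - 1) = Real.exp (Real.log t * (s - 1)) * w ^ (s - 1) := by
    rw [Real.mul_rpow ht.le hw.le, Real.rpow_def_of_pos ht]
  have h2 : t⁻¹ = Real.exp (-Real.log t) := by
    rw [Real.exp_neg, Real.exp_log ht]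
  have h3 : Real.exp ((θ - Real.eulerMascheroniConstant) * s) *
      Real.exp (Real.log t * (s - 1)) =
      Real.exp (-Real.log t) *
      Real.exp ((θ + Real.log t - Real.eulerMascheroniConstant) * s) := by
    rw [← Real.exp_add, ← Real.exp_add]; ring_nf
  dsimp only
  rw [h1, h2]
  linear_combination (s * w ^ (s - 1) / Real.Gamma (s + 1)) * h3

theorem stmt_11 (t : ℝ) (ht : 0 < t) (θ : ℝ) (x : EuclideanSpace ℝ (Fin 2)) :
    Kkernel t θ x = Kkernel 1 (θ + Real.log t) ((Real.sqrt t)⁻¹ • x) := by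
  unfold Kkernel
  congr 1
  set x' := (Real.sqrt t)⁻¹ • x
  set θ' := θ + Real.log t
  have key : ∀ v ∈ Set.uIcc (0:ℝ) 1,
      (fun v => ∫ u in (0:ℝ)..(t*v), heatKernel2d u x * Gtheta θ (t*v - u)) v
      = (fun v => t⁻¹ * ∫ u in (0:ℝ)..v, heatKernel2d u x' * Gtheta θ' (v - u)) v := by
    intro v hv
    rw [Set.uIcc_of_le (by norm_num)] at hv
    simp only
    have h1 : (∫ u in (0:ℝ)..(t*v), heatKernel2d u x * Gtheta θ (t*v - u))
        = t • ∫ u in (0:ℝ)..v, heatKernel2d (t*u) x * Gtheta θ (t*v - t*u) := by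
      rw [intervalIntegral.smul_integral_comp_mul_left
        (fun u => heatKernel2d u x * Gtheta θ (t*v - u)) t, mul_zero]
    rw [h1]
    have h2 : ∀ u ∈ Set.uIcc (0:ℝ) v,
        heatKernel2d (t*u) x * Gtheta θ (t*v - t*u)
        = t⁻¹ * t⁻¹ * (heatKernel2d u x' * Gtheta θ' (v - u)) := by
      intro u hu
      rw [Set.uIcc_of_le hv.1] at hu
      rcases eq_or_lt_of_le hu.1 with h0 | h0
      · simp [← h0, heatKernel2d_zero]
      rcases eq_or_lt_of_le hu.2 with h0' | h0'
      · rw [h0']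
        simp [Gtheta_zero]
      · have hvu : (0:ℝ) < v - u := by linarith
        rw [heat_scale t ht u h0 x, show t*v - t*u = t*(v-u) by ring,
          G_scale t ht θ (v-u) hvu]
        ring
    rw [intervalIntegral.integral_congr h2, intervalIntegral.integral_const_mul,
      smul_eq_mul]
    field_simp
  calc (∫ v in (0:ℝ)..t, ∫ u in (0:ℝ)..v, heatKernel2d u x * Gtheta θ (v - u))
      = t • ∫ v in (0:ℝ)..1,
        ∫ u in (0:ℝ)..(t*v), heatKernel2d u x * Gtheta θ (t*v - u) := by
        rw [intervalIntegral.smul_integral_comp_mul_left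
          (fun v => ∫ u in (0:ℝ)..v, heatKernel2d u x * Gtheta θ (v - u)) t,
          mul_zero, mul_one]
    _ = t • ∫ v in (0:ℝ)..1,
        t⁻¹ * ∫ u in (0:ℝ)..v, heatKernel2d u x' * Gtheta θ' (v - u) := by
        rw [intervalIntegral.integral_congr key]
    _ = ∫ v in (0:ℝ)..1, ∫ u in (0:ℝ)..v, heatKernel2d u x' * Gtheta θ' (v - u) := by
        rw [intervalIntegral.integral_const_mul, smul_eq_mul, ← mul_assoc,
          mul_inv_cancel₀ ht.ne', one_mul]
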